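/- Let V be a real vector space, let τ_1, …, τ_N be positive time steps, and let v^0, v^1, …, v^N be any sequence in V. Then for every 1 ≤ n ≤ N, Σ_{j=1}^n θ^{(n)}_{n−j} D_2 v^j = v^n − v^{n−1}; that is, the DOC kernels invert the BDF2 operator. -/

import Mathlib

open Finset

/-- BDF2 convolution kernels `b^{(n)}_j` built from the step sizes `τ`. -/
noncomputable def bdf2 (τ : ℕ → ℝ) (n j : ℕ) : ℝ :=
  if n = 1 then (if j = 0 then 1 / τ 1 else 0)
  else if j = 0 then (1 + 2 * (τ n / τ (n - 1))) / (τ n * (1 + τ n / τ (n - 1)))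
  else if j = 1 then -(τ n / τ (n - 1)) ^ 2 / (τ n * (1 + τ n / τ (n - 1)))
  else 0

/-- DOC kernels: `doc τ n g = θ^{(n)}_g`, defined by the recursive procedure
`θ^{(n)}_0 = 1/b^{(n)}_0`, `θ^{(n)}_{n-k} = -(1/b^{(k)}_0) ∑_{j=k+1}^n θ^{(n)}_{n-j} b^{(j)}_{j-k}`. -/
noncomputable def doc (τ : ℕ → ℝ) (n : ℕ) : ℕ → ℝ
  | 0 => 1 / bdf2 τ n 0
  | (g + 1) =>
    -(1 / bdf2 τ (n - (g + 1)) 0) *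
      ∑ i ∈ (Finset.range (g + 1)).attach,
        doc τ n i.1 * bdf2 τ (n - i.1) (g + 1 - i.1)
  decreasing_by exact Finset.mem_range.mp i.2

/-- The variable-step BDF2 formula `D_2 v^n = ∑_{k=1}^n b^{(n)}_{n-k} (v^k - v^{k-1})`. -/
noncomputable def D2 {V : Type*} [AddCommGroup V] [Module ℝ V]
    (τ : ℕ → ℝ) (v : ℕ → V) (n : ℕ) : V :=
  ∑ k ∈ Finset.Icc 1 n, bdf2 τ n (n - k) • (v k - v (k - 1))

/-- Time levels `t_n = τ_1 + ⋯ + τ_n`. -/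
noncomputable def tlv (τ : ℕ → ℝ) (n : ℕ) : ℝ := ∑ i ∈ Finset.Icc 1 n, τ i

lemma bdf2_zero_pos (N : ℕ) (τ : ℕ → ℝ) (hτ : ∀ k, 1 ≤ k → k ≤ N → 0 < τ k)
    (n : ℕ) (h1 : 1 ≤ n) (h2 : n ≤ N) : 0 < bdf2 τ n 0 := by
  unfold bdf2
  by_cases hn : n = 1
  · simp [hn]
    exact hτ 1 le_rfl (hn ▸ h2)
  · have hn2 : 2 ≤ n := by omega
    have h1' : 0 < τ n := hτ n h1 h2
    have h2' : 0 < τ (n - 1) := hτ (n - 1) (by omega) (by omega)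
    have hr : 0 < τ n / τ (n - 1) := div_pos h1' h2'
    simp only [hn, if_false, if_pos rfl]
    apply div_pos <;> nlinarith

lemma doc_delta (N : ℕ) (τ : ℕ → ℝ) (hτ : ∀ k, 1 ≤ k → k ≤ N → 0 < τ k) :
    ∀ n k, 1 ≤ k → k ≤ n → n ≤ N →
      ∑ j ∈ Finset.Icc k n, doc τ n (n - j) * bdf2 τ j (j - k)
        = if k = n then 1 else 0 := by
  intro n k hk hkn hn
  rcases eq_or_lt_of_le hkn with h | h
  · subst h
    simp only [Finset.Icc_self, Finset.sum_singleton, Nat.sub_self, if_pos rfl]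
    have hb := (bdf2_zero_pos N τ hτ k hk hn).ne'
    rw [doc]
    field_simp
    simp
  · have hne : ¬ (k = n) := by omega
    rw [Finset.Icc_eq_cons_Ioc hkn, Finset.sum_cons, if_neg hne]
    obtain ⟨g, hg⟩ : ∃ g, n - k = g + 1 := ⟨n - k - 1, by omega⟩
    have hS : ∑ j ∈ Finset.Ioc k n, doc τ n (n - j) * bdf2 τ j (j - k)
        = ∑ i ∈ (Finset.range (g + 1)).attach,
            doc τ n i.1 * bdf2 τ (n - i.1) (g + 1 - i.1) := by
      rw [Finset.sum_attach (Finset.range (g+1)) (fun i => doc τ n i * bdf2 τ (n - i) (g + 1 - i))]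
      apply Finset.sum_nbij' (fun j => n - j) (fun i => n - i)
      · intro j hj; simp only [Finset.mem_Ioc] at hj; simp only [Finset.mem_range]; omega
      · intro i hi; simp only [Finset.mem_range] at hi; simp only [Finset.mem_Ioc]; omega
      · intro j hj; simp only [Finset.mem_Ioc] at hj; omega
      · intro i hi; simp only [Finset.mem_range] at hi; omega
      · intro j hj; simp only [Finset.mem_Ioc] at hj
        have h1 : n - (n - j) = j := by omega
        have h2 : g + 1 - (n - j) = j - k := by omega
        rw [h1, h2]
    rw [hg, hS, doc]
    have hk' : n - (g + 1) = k := by omega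
    rw [hk']
    have hb := (bdf2_zero_pos N τ hτ k hk (by omega)).ne'
    field_simp
    rw [Nat.sub_self]
    ring

/-- the DOC kernels invert the BDF2 operator:
`∑_{j=1}^n θ^{(n)}_{n-j} D_2 v^j = v^n - v^{n-1}`. -/
theorem doc_inverts_bdf2
    {V : Type*} [AddCommGroup V] [Module ℝ V]
    (N : ℕ) (τ : ℕ → ℝ) (hτ : ∀ k, 1 ≤ k → k ≤ N → 0 < τ k)
    (v : ℕ → V) :
    ∀ n, 1 ≤ n → n ≤ N →
      ∑ j ∈ Finset.Icc 1 n, doc τ n (n - j) • D2 τ v j = v n - v (n - 1) := by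
  intro n h1 h2
  have key : ∑ j ∈ Finset.Icc 1 n, doc τ n (n - j) • D2 τ v j
      = ∑ k ∈ Finset.Icc 1 n, ∑ j ∈ Finset.Icc k n,
          (doc τ n (n - j) * bdf2 τ j (j - k)) • (v k - v (k - 1)) := by
    simp only [D2, Finset.smul_sum, smul_smul]
    exact Finset.sum_comm' (by intro j k; simp only [Finset.mem_Icc]; omega)
  rw [key]
  have step : ∀ k ∈ Finset.Icc 1 n,
      (∑ j ∈ Finset.Icc k n, (doc τ n (n - j) * bdf2 τ j (j - k)) • (v k - v (k - 1)))
        = (if k = n then (1:ℝ) else 0) • (v k - v (k - 1)) := by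
    intro k hk
    simp only [Finset.mem_Icc] at hk
    rw [← Finset.sum_smul, doc_delta N τ hτ n k hk.1 hk.2 h2]
  rw [Finset.sum_congr rfl step]
  simp only [ite_smul, one_smul, zero_smul]
  rw [Finset.sum_ite_eq' (Finset.Icc 1 n) n (fun k => v k - v (k - 1))]
  simp [Finset.mem_Icc, h1]
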